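/- Let c be a complex number with c = a/q + γ, where a, q are coprime Gaussian integers, q ≠ 0, |γ| ≤ |q|⁻². If n is a Gaussian integer with 0 < |n|² ≤ |q|²/8, then ‖nc‖ ≥ 1/(√8·|q|), where ‖z‖ := max{‖Re(z)‖, ‖Im(z)‖} and ‖x‖ denotes the distance from the real number x to the nearest integer. -/

import Mathlib

open Complex GaussianInt

/-- Distance from a real number to the nearest integer. -/
noncomputable def nint (x : ℝ) : ℝ := ⨅ n : ℤ, |x - (n : ℝ)|

/-- Sup-norm distance from a complex number to the nearest Gaussian integer. -/
noncomputable def nintC (z : ℂ) : ℝ := max (nint z.re) (nint z.im)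

lemma nint_eq (x : ℝ) : nint x = |x - (round x : ℝ)| := by
  refine le_antisymm ?_ (le_ciInf fun m => round_le x m)
  exact ciInf_le ⟨0, by rintro y ⟨m, rfl⟩; exact abs_nonneg _⟩ (round x)

lemma nint_le (x : ℝ) (m : ℤ) : nint x ≤ |x - (m : ℝ)| := by
  rw [nint_eq]; exact round_le x m

lemma nint_add_ge (x y : ℝ) : nint x - |y| ≤ nint (x + y) := by
  rw [nint_eq (x + y)]
  have := nint_le x (round (x + y))
  have h2 : |x - (round (x+y) : ℝ)| - |y| ≤ |x + y - (round (x+y) : ℝ)| := by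
    have := abs_sub_abs_le_abs_sub (x - (round (x+y) : ℝ)) (-y)
    simp only [abs_neg] at this
    have e : x - (round (x+y) : ℝ) - -y = x + y - (round (x+y) : ℝ) := by ring
    rw [e] at this
    linarith
  linarith

lemma one_le_abs_toComplex {m : GaussianInt} (hm : m ≠ 0) :
    1 ≤ ‖(m : ℂ)‖ := by
  have h1 : 1 ≤ (m.norm : ℝ) := by
    have : 1 ≤ m.norm := GaussianInt.norm_pos.2 hm
    exact_mod_cast this
  rw [GaussianInt.intCast_real_norm] at h1
  have := Complex.sq_norm (m : ℂ)
  nlinarith [norm_nonneg (m : ℂ)]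

/-- If `c = a/q + γ` with `(a,q) = 1`, `|γ| ≤ |q|⁻²`, and `n` is a nonzero Gaussian
integer with `|n|² ≤ |q|²/8`, then `‖nc‖ ≥ 1/(√8·|q|)`. -/
theorem gaussian_small_norm_lower_bound (c γ : ℂ) (a q : GaussianInt) (hq : q ≠ 0)
    (hcop : IsCoprime a q) (hc : c = (a : ℂ) / (q : ℂ) + γ)
    (hγ : ‖γ‖ ≤ (‖(q : ℂ)‖)⁻¹ ^ 2)
    (n : GaussianInt) (hn : n ≠ 0)
    (hsize : ‖(n : ℂ)‖ ^ 2 ≤ ‖(q : ℂ)‖ ^ 2 / 8) :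
    1 / (Real.sqrt 8 * ‖(q : ℂ)‖) ≤ nintC ((n : ℂ) * c) := by
  set Q : ℝ := ‖(q : ℂ)‖ with hQ
  have hQ1 : 1 ≤ Q := one_le_abs_toComplex hq
  have hQ0 : 0 < Q := lt_of_lt_of_le one_pos hQ1
  have hqC : (q : ℂ) ≠ 0 := fun h => hq (GaussianInt.toComplex_eq_zero.1 h)
  -- q does not divide n * a
  have hndvd : ¬ q ∣ n * a := by
    intro hdvd
    have hqn : q ∣ n := (hcop.symm).dvd_of_dvd_mul_right hdvd
    obtain ⟨k, rfl⟩ := hqn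
    have hk : k ≠ 0 := by rintro rfl; simp at hn
    have h1 : 1 ≤ ‖(k : ℂ)‖ := one_le_abs_toComplex hk
    have : ‖((q * k : GaussianInt) : ℂ)‖ = Q * ‖(k : ℂ)‖ := by
      rw [GaussianInt.toComplex_mul, norm_mul]
    rw [this] at hsize
    have hKQ : Q ^ 2 ≤ (Q * ‖(k : ℂ)‖) ^ 2 := by
      nlinarith [mul_pos hQ0 hQ0, mul_le_mul h1 h1 zero_le_one (norm_nonneg (k : ℂ))]
    nlinarith
  set z : ℂ := (n : ℂ) * (a : ℂ) / (q : ℂ) with hz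
  set g : GaussianInt := ⟨round z.re, round z.im⟩ with hg
  -- z - g is at distance ≥ 1/Q from 0
  have hkey : 1 / Q ≤ ‖(z - (g : ℂ))‖ := by
    have hne : n * a - g * q ≠ 0 := by
      intro h
      apply hndvd
      exact ⟨g, by linear_combination h⟩
    have h1 : 1 ≤ ‖((n * a - g * q : GaussianInt) : ℂ)‖ :=
      one_le_abs_toComplex hne
    have he : ((n * a - g * q : GaussianInt) : ℂ) = (z - (g : ℂ)) * (q : ℂ) := by
      push_cast [GaussianInt.toComplex_mul, GaussianInt.toComplex_sub]
      rw [hz]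
      field_simp
    rw [he, norm_mul] at h1
    rw [div_le_iff₀ hQ0]
    calc 1 ≤ ‖(z - (g : ℂ))‖ * Q := h1
    _ = ‖(z - (g:ℂ))‖ * Q := rfl
  -- sup-norm lower bound for z
  have hzlow : 1 / (Real.sqrt 2 * Q) ≤ nintC z := by
    have hre : (g : ℂ).re = (round z.re : ℝ) := GaussianInt.re_toComplex _ _
    have him : (g : ℂ).im = (round z.im : ℝ) := GaussianInt.im_toComplex _ _
    have hM : ‖(z - (g : ℂ))‖ ≤ Real.sqrt 2 * nintC z := by
      have h2 : ‖(z - (g:ℂ))‖ ^ 2 =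
          (z.re - (round z.re : ℝ))^2 + (z.im - (round z.im : ℝ))^2 := by
        rw [Complex.sq_norm, Complex.normSq_apply, Complex.sub_re, Complex.sub_im, hre, him]
        ring
      have hnc : nintC z = max |z.re - (round z.re : ℝ)| |z.im - (round z.im : ℝ)| := by
        rw [nintC, nint_eq, nint_eq]
      have ha : |z.re - (round z.re : ℝ)| ≤ nintC z := by rw [hnc]; exact le_max_left _ _
      have hb : |z.im - (round z.im : ℝ)| ≤ nintC z := by rw [hnc]; exact le_max_right _ _
      have hnn : 0 ≤ nintC z := le_trans (abs_nonneg _) ha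
      have h3 : ‖(z - (g:ℂ))‖ ^ 2 ≤ 2 * nintC z ^ 2 := by
        rw [h2]
        nlinarith [_root_.sq_abs (z.re - (round z.re : ℝ)), _root_.sq_abs (z.im - (round z.im : ℝ)),
          abs_nonneg (z.re - (round z.re : ℝ)), abs_nonneg (z.im - (round z.im : ℝ))]
      have hs2 : Real.sqrt 2 ^ 2 = 2 := Real.sq_sqrt (by norm_num)
      have h4 := Real.sqrt_le_sqrt h3
      rwa [Real.sqrt_sq (norm_nonneg _),
        show (2:ℝ) * nintC z ^ 2 = (Real.sqrt 2 * nintC z)^2 by rw [mul_pow, hs2],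
        Real.sqrt_sq (by positivity)] at h4
    have hs2 : (0:ℝ) < Real.sqrt 2 := Real.sqrt_pos.2 (by norm_num)
    rw [div_le_iff₀ (by positivity)]
    calc 1 ≤ ‖(z - (g:ℂ))‖ * Q := by
            have := hkey; rw [div_le_iff₀ hQ0] at this; linarith
    _ ≤ Real.sqrt 2 * nintC z * Q := by nlinarith
    _ = nintC z * (Real.sqrt 2 * Q) := by ring
  -- bound |n γ|
  have hnγ : ‖((n : ℂ) * γ)‖ ≤ 1 / (Real.sqrt 8 * Q) := by
    have hs8 : (0:ℝ) < Real.sqrt 8 := Real.sqrt_pos.2 (by norm_num)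
    have hs8sq : Real.sqrt 8 ^ 2 = 8 := Real.sq_sqrt (by norm_num)
    have hnle : ‖(n : ℂ)‖ ≤ Q / Real.sqrt 8 := by
      have h4 := Real.sqrt_le_sqrt hsize
      rwa [Real.sqrt_sq (norm_nonneg _),
        show Q ^ 2 / 8 = (Q / Real.sqrt 8)^2 by rw [div_pow, hs8sq],
        Real.sqrt_sq (by positivity)] at h4
    rw [norm_mul]
    calc ‖(n:ℂ)‖ * ‖γ‖ ≤ (Q / Real.sqrt 8) * (Q⁻¹ ^ 2) := by
          apply mul_le_mul hnle hγ (norm_nonneg _) (by positivity)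
    _ = 1 / (Real.sqrt 8 * Q) := by field_simp
  -- combine
  have hdecomp : (n : ℂ) * c = z + (n : ℂ) * γ := by
    rw [hc, hz]; ring
  set t := ‖((n : ℂ) * γ)‖ with ht
  have hret : |((n:ℂ) * γ).re| ≤ t := Complex.abs_re_le_norm _
  have himt : |((n:ℂ) * γ).im| ≤ t := Complex.abs_im_le_norm _
  have hlow : nintC z - t ≤ nintC ((n:ℂ) * c) := by
    rw [hdecomp]
    have h1 : nint z.re - t ≤ nint (z + (n:ℂ)*γ).re := by
      have := nint_add_ge z.re ((n:ℂ)*γ).re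
      simp only [Complex.add_re] at *
      linarith
    have h2 : nint z.im - t ≤ nint (z + (n:ℂ)*γ).im := by
      have := nint_add_ge z.im ((n:ℂ)*γ).im
      simp only [Complex.add_im] at *
      linarith
    rw [nintC, nintC]
    rcases max_cases (nint z.re) (nint z.im) with ⟨h, _⟩ | ⟨h, _⟩
    · rw [h]; exact le_trans h1 (le_max_left _ _)
    · rw [h]; exact le_trans h2 (le_max_right _ _)
  -- final arithmetic: 1/(√2 Q) - 1/(√8 Q) = 1/(√8 Q)
  have hfin : 1 / (Real.sqrt 8 * Q) ≤ 1 / (Real.sqrt 2 * Q) - 1 / (Real.sqrt 8 * Q) := by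
    have h8 : Real.sqrt 8 = 2 * Real.sqrt 2 := by
      rw [show (8:ℝ) = 2^2 * 2 by norm_num, Real.sqrt_mul (by positivity),
        Real.sqrt_sq (by norm_num)]
    have hs2 : (0:ℝ) < Real.sqrt 2 := Real.sqrt_pos.2 (by norm_num)
    rw [h8]
    have e : 1/(Real.sqrt 2 * Q) - 1/(2 * Real.sqrt 2 * Q) = 1/(2 * Real.sqrt 2 * Q) := by
      field_simp
      ring
    linarith [e.ge]
  have : nintC z - t ≥ 1 / (Real.sqrt 2 * Q) - 1 / (Real.sqrt 8 * Q) := by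
    linarith [hzlow, hnγ]
  linarith
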